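/- Let (X_n)_{n≥1} be an infinite sequence of random variables with values in a Polish space X, with law P and predictive rule (P_n)_{n≥0}. Then (X_n)_{n≥1} is exchangeable if and only if, for every n≥0, the following two conditions hold: (i) for every measurable set A, P_n(A | x_{1:n}) is a symmetric function of (x_1,…,x_n); (ii) the set function (A,B) ↦ ∫_A P_{n+1}(B | x_{1:n}, x_{n+1}) dP_n(x_{n+1} | x_{1:n}) is symmetric in A and B (here P_0(·|x_{1:0}) means P_0(·)). -/

import Mathlib

open MeasureTheory ProbabilityTheory Filter Topology
open scoped ENNReal NNReal

/-- A sequence of random variables is exchangeable if its joint law is invariant under every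
finite permutation of the indices. -/
def Exchangeable {Ω 𝕏 : Type*} [MeasurableSpace Ω] [MeasurableSpace 𝕏]
    (μ : Measure Ω) (X : ℕ → Ω → 𝕏) : Prop :=
  ∀ σ : Equiv.Perm ℕ, {n | σ n ≠ n}.Finite →
    Measure.map (fun ω => fun n => X (σ n) ω) μ = Measure.map (fun ω => fun n => X n ω) μ

/-- `(P n)_{n≥0}` is (a version of) the predictive rule of the sequence `X` under `μ`:
`P n` is a regular conditional distribution of `X_{n+1}` given `(X_1,…,X_n)` (and `P 0` is the
law of `X_1`, the history space `Fin 0 → 𝕏` being a singleton). -/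
def IsPredictiveRule {Ω 𝕏 : Type*} [MeasurableSpace Ω] [MeasurableSpace 𝕏]
    (μ : Measure Ω) (X : ℕ → Ω → 𝕏)
    (P : (n : ℕ) → Kernel (Fin n → 𝕏) 𝕏) : Prop :=
  ∀ (n : ℕ) (A : Set 𝕏) (B : Set (Fin n → 𝕏)), MeasurableSet A → MeasurableSet B →
    μ {ω | (fun i : Fin n => X i ω) ∈ B ∧ X n ω ∈ A}
      = ∫⁻ x in B, P n x A ∂(Measure.map (fun ω (i : Fin n) => X i ω) μ)

set_option linter.unusedSectionVars false
set_option linter.unusedVariables false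


open MeasureTheory ProbabilityTheory Set
open scoped ENNReal NNReal

namespace FLRAux

variable {𝕏 : Type*} [MeasurableSpace 𝕏]

/-- Action of a permutation on tuples. -/
def pmap {n : ℕ} (σ : Equiv.Perm (Fin n)) : (Fin n → 𝕏) → (Fin n → 𝕏) := fun x i => x (σ i)

lemma measurable_pmap {n : ℕ} {σ : Equiv.Perm (Fin n)} : Measurable (pmap (𝕏 := 𝕏) σ) :=
  measurable_pi_lambda _ (fun _ => measurable_pi_apply _)

lemma pmap_pmap {n : ℕ} (σ τ : Equiv.Perm (Fin n)) (x : Fin n → 𝕏) :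
    pmap σ (pmap τ x) = pmap (τ * σ) x := rfl

lemma pmap_one {n : ℕ} : pmap (𝕏 := 𝕏) (1 : Equiv.Perm (Fin n)) = id := rfl

lemma pmap_inv_pmap {n : ℕ} (σ : Equiv.Perm (Fin n)) (x : Fin n → 𝕏) :
    pmap σ⁻¹ (pmap σ x) = x := by
  rw [pmap_pmap]
  funext i
  simp [pmap]

/-- snoc as a map on products. -/
def snocm {n : ℕ} : (Fin n → 𝕏) × 𝕏 → (Fin (n+1) → 𝕏) := fun p => Fin.snoc p.1 p.2

lemma snocm_apply {n : ℕ} (x : Fin n → 𝕏) (y : 𝕏) : snocm (x, y) = Fin.snoc x y := rfl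

lemma measurable_snocm {n : ℕ} : Measurable (snocm (𝕏 := 𝕏) (n := n)) := by
  refine measurable_pi_lambda _ (fun i => ?_)
  refine Fin.lastCases ?_ ?_ i
  · simpa [snocm, Fin.snoc_last] using measurable_snd
  · intro j
    simpa [snocm, Fin.snoc_castSucc, Function.comp_def] using ((measurable_pi_apply j).comp measurable_fst)

/-- Two finite measures on a product agreeing on all measurable rectangles agree. -/
lemma prod_ext {α β : Type*} [MeasurableSpace α] [MeasurableSpace β]
    {μ ν : Measure (α × β)} [IsFiniteMeasure μ] [IsFiniteMeasure ν]
    (h : ∀ s t, MeasurableSet s → MeasurableSet t → μ (s ×ˢ t) = ν (s ×ˢ t)) : μ = ν := by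
  refine ext_of_generate_finite _ generateFrom_prod.symm isPiSystem_prod ?_ ?_
  · rintro u ⟨s, hs, t, ht, rfl⟩
    exact h s t hs ht
  · simpa [Set.univ_prod_univ] using h univ univ MeasurableSet.univ MeasurableSet.univ

/-- Symmetrization of a set of tuples. -/
def symSet {n : ℕ} (S : Set (Fin n → 𝕏)) : Set (Fin n → 𝕏) :=
  ⋃ τ : Equiv.Perm (Fin n), pmap τ ⁻¹' S

lemma subset_symSet {n : ℕ} {S : Set (Fin n → 𝕏)} : S ⊆ symSet S := fun x hx =>
  Set.mem_iUnion.2 ⟨1, hx⟩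

lemma measurableSet_symSet {n : ℕ} {S : Set (Fin n → 𝕏)} (hS : MeasurableSet S) :
    MeasurableSet (symSet S) :=
  MeasurableSet.iUnion (fun _ => measurable_pmap hS)

lemma pmap_preimage_symSet {n : ℕ} (τ : Equiv.Perm (Fin n)) (S : Set (Fin n → 𝕏)) :
    pmap τ ⁻¹' symSet S = symSet S := by
  ext z
  simp only [symSet, Set.mem_iUnion, Set.mem_preimage]
  constructor
  · rintro ⟨ρ, h⟩
    refine ⟨τ * ρ, ?_⟩
    rwa [← pmap_pmap]
  · rintro ⟨ρ, h⟩
    refine ⟨τ⁻¹ * ρ, ?_⟩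
    rw [pmap_pmap, ← mul_assoc, mul_inv_cancel, one_mul]
    exact h

lemma countable_generatePiSystem {α : Type*} {S : Set (Set α)} (hS : S.Countable) :
    (generatePiSystem S).Countable := by
  have h1 : {t : Set (Set α) | t.Finite ∧ t ⊆ S}.Countable :=
    Set.countable_setOf_finite_subset hS
  refine ((h1.image sInter).mono ?_)
  intro u hu
  induction hu with
  | base h_s =>
    rename_i s
    exact ⟨{s}, ⟨Set.finite_singleton _, by simpa⟩, by simp⟩
  | inter h_s h_t h_ne ihs iht =>
    obtain ⟨ts, ⟨hts_f, hts_s⟩, rfl⟩ := ihs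
    obtain ⟨tt, ⟨htt_f, htt_s⟩, rfl⟩ := iht
    exact ⟨ts ∪ tt, ⟨hts_f.union htt_f, Set.union_subset hts_s htt_s⟩,
      Set.sInter_union _ _⟩

/-- The set of points where two Markov kernels into a countably generated space agree
is measurable. -/
lemma measurableSet_kernel_eq {α β : Type*} [MeasurableSpace α] [MeasurableSpace β]
    [MeasurableSpace.CountablyGenerated β]
    (κ η : Kernel α β) [IsMarkovKernel κ] [IsMarkovKernel η] :
    MeasurableSet {x | κ x = η x} := by
  classical
  set C := generatePiSystem (MeasurableSpace.countableGeneratingSet β) with hC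
  have hCc : C.Countable :=
    countable_generatePiSystem MeasurableSpace.countable_countableGeneratingSet
  have hCgen : MeasurableSpace.generateFrom C = ‹MeasurableSpace β› := by
    rw [hC, generateFrom_generatePiSystem_eq,
      MeasurableSpace.generateFrom_countableGeneratingSet]
  have hCmeas : ∀ s ∈ C, MeasurableSet s := by
    intro s hs
    exact generatePiSystem_measurableSet
      (fun t ht => MeasurableSpace.measurableSet_countableGeneratingSet ht) _ hs
  have heq : {x | κ x = η x} = ⋂ s ∈ C, {x | κ x s = η x s} := by
    ext x
    simp only [Set.mem_setOf_eq, Set.mem_iInter]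
    constructor
    · intro h s _; rw [h]
    · intro h
      refine ext_of_generate_finite C hCgen.symm (isPiSystem_generatePiSystem _)
        (fun s hs => h s hs) ?_
      simp [measure_univ]
  rw [heq]
  refine MeasurableSet.biInter hCc (fun s hs => ?_)
  have h1 : Measurable fun x => κ x s := Kernel.measurable_coe κ (hCmeas s hs)
  have h2 : Measurable fun x => η x s := Kernel.measurable_coe η (hCmeas s hs)
  have : {x | κ x s = η x s} = {x | κ x s ≤ η x s} ∩ {x | η x s ≤ κ x s} := by
    ext x; simp only [Set.mem_setOf_eq, Set.mem_inter_iff]; exact ⟨fun h => ⟨h.le, h.ge⟩, fun h => le_antisymm h.1 h.2⟩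
  rw [this]
  exact (measurableSet_le h1 h2).inter (measurableSet_le h2 h1)

end FLRAux

section SecB
open MeasureTheory ProbabilityTheory Set
namespace FLRAux

variable {𝕏 : Type*} [MeasurableSpace 𝕏]

/-- Sorting permutation of a tuple according to an embedding into `ℝ`. -/
noncomputable def sortPerm (ι : 𝕏 → ℝ) {n : ℕ} (z : Fin n → 𝕏) : Equiv.Perm (Fin n) :=
  Tuple.sort (ι ∘ z)

/-- Sorted version of a tuple. -/
noncomputable def sortFn (ι : 𝕏 → ℝ) {n : ℕ} (z : Fin n → 𝕏) : Fin n → 𝕏 :=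
  pmap (sortPerm ι z) z

lemma sortFn_pmap {ι : 𝕏 → ℝ} (hinj : Function.Injective ι) {n : ℕ}
    (τ : Equiv.Perm (Fin n)) (z : Fin n → 𝕏) : sortFn ι (pmap τ z) = sortFn ι z := by
  have key : (ι ∘ z ∘ τ) ∘ Tuple.sort ((ι ∘ z) ∘ τ) = (ι ∘ z) ∘ Tuple.sort (ι ∘ z) :=
    Tuple.comp_perm_comp_sort_eq_comp_sort (f := ι ∘ z) (σ := τ)
  have : ι ∘ sortFn ι (pmap τ z) = ι ∘ sortFn ι z := key
  funext i
  exact hinj (congrFun this i)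

lemma measurableSet_sortPerm_eq {ι : 𝕏 → ℝ} (hι : Measurable ι) {n : ℕ}
    (σ : Equiv.Perm (Fin n)) : MeasurableSet {z : Fin n → 𝕏 | sortPerm ι z = σ} := by
  have hle : ∀ i j : Fin n, MeasurableSet {z : Fin n → 𝕏 | ι (z (σ i)) ≤ ι (z (σ j))} :=
    fun i j => measurableSet_le (hι.comp (measurable_pi_apply _))
      (hι.comp (measurable_pi_apply _))
  have heqm : ∀ i j : Fin n, MeasurableSet {z : Fin n → 𝕏 | ι (z (σ i)) = ι (z (σ j))} := by
    intro i j
    have : {z : Fin n → 𝕏 | ι (z (σ i)) = ι (z (σ j))}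
        = {z | ι (z (σ i)) ≤ ι (z (σ j))} ∩ {z | ι (z (σ j)) ≤ ι (z (σ i))} := by
      ext z
      simp only [mem_setOf_eq, mem_inter_iff]
      exact ⟨fun h => ⟨h.le, h.ge⟩, fun h => le_antisymm h.1 h.2⟩
    rw [this]; exact (hle i j).inter (hle j i)
  have hset : {z : Fin n → 𝕏 | sortPerm ι z = σ}
      = {z | Monotone ((ι ∘ z) ∘ σ)}
        ∩ {z | ∀ i j, i < j → (ι ∘ z) (σ i) = (ι ∘ z) (σ j) → σ i < σ j} := by
    ext z
    simp only [mem_setOf_eq, mem_inter_iff, sortPerm]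
    rw [eq_comm, Tuple.eq_sort_iff]
  have h1 : MeasurableSet {z : Fin n → 𝕏 | Monotone ((ι ∘ z) ∘ σ)} := by
    have : {z : Fin n → 𝕏 | Monotone ((ι ∘ z) ∘ σ)}
        = ⋂ (i : Fin n) (j : Fin n) (_ : i ≤ j), {z | ι (z (σ i)) ≤ ι (z (σ j))} := by
      ext z
      simp only [mem_setOf_eq, mem_iInter]
      exact ⟨fun h i j hij => h hij, fun h i j hij => h i j hij⟩
    rw [this]
    exact .iInter fun i => .iInter fun j => .iInter fun _ => hle i j
  have h2 : MeasurableSet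
      {z : Fin n → 𝕏 | ∀ i j, i < j → (ι ∘ z) (σ i) = (ι ∘ z) (σ j) → σ i < σ j} := by
    have : {z : Fin n → 𝕏 | ∀ i j, i < j → (ι ∘ z) (σ i) = (ι ∘ z) (σ j) → σ i < σ j}
        = ⋂ (i : Fin n) (j : Fin n) (_ : i < j),
            {z | ι (z (σ i)) = ι (z (σ j)) → σ i < σ j} := by
      ext z
      simp only [mem_setOf_eq, mem_iInter, Function.comp]
    rw [this]
    refine .iInter fun i => .iInter fun j => .iInter fun _ => ?_
    by_cases h : σ i < σ j
    · have : {z : Fin n → 𝕏 | ι (z (σ i)) = ι (z (σ j)) → σ i < σ j} = univ := by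
        ext z; simp [h]
      rw [this]; exact .univ
    · have : {z : Fin n → 𝕏 | ι (z (σ i)) = ι (z (σ j)) → σ i < σ j}
          = {z | ι (z (σ i)) = ι (z (σ j))}ᶜ := by
        ext z; simp only [mem_setOf_eq, mem_compl_iff]
        exact ⟨fun hz hz' => h (hz hz'), fun hz hz' => absurd hz' hz⟩
      rw [this]; exact (heqm i j).compl
  rw [hset]; exact h1.inter h2

lemma measurable_sortFn {ι : 𝕏 → ℝ} (hι : Measurable ι) {n : ℕ} :
    Measurable (sortFn ι (n := n)) := by
  intro S hS
  have : sortFn ι ⁻¹' S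
      = ⋃ σ : Equiv.Perm (Fin n), ({z | sortPerm ι z = σ} ∩ pmap σ ⁻¹' S) := by
    ext z
    simp only [mem_preimage, mem_iUnion, mem_inter_iff, mem_setOf_eq]
    constructor
    · intro h
      exact ⟨sortPerm ι z, rfl, h⟩
    · rintro ⟨σ, hσ, h⟩
      simpa [sortFn, hσ] using h
  rw [this]
  exact .iUnion fun σ => (measurableSet_sortPerm_eq hι σ).inter (measurable_pmap hS)

end FLRAux
end SecB

section SecC
open MeasureTheory ProbabilityTheory Set
namespace FLRAux

variable {𝕏 : Type*} [MeasurableSpace 𝕏]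

/-- Restriction of a sequence to its first `n` values. -/
def res (n : ℕ) : (ℕ → 𝕏) → (Fin n → 𝕏) := fun f i => f i

lemma measurable_res {n : ℕ} : Measurable (res (𝕏 := 𝕏) n) :=
  measurable_pi_lambda _ (fun _ => measurable_pi_apply _)

/-- First `n` values together with the `n`-th value. -/
def en (n : ℕ) : (ℕ → 𝕏) → (Fin n → 𝕏) × 𝕏 := fun f => (res n f, f n)

lemma measurable_en {n : ℕ} : Measurable (en (𝕏 := 𝕏) n) :=
  measurable_res.prodMk (measurable_pi_apply _)

lemma snocm_en (n : ℕ) (f : ℕ → 𝕏) : snocm (en n f) = res (n+1) f := by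
  funext i
  refine Fin.lastCases ?_ ?_ i
  · simp [snocm, en, res, Fin.snoc_last]
  · intro j
    simp [snocm, en, res, Fin.snoc_castSucc]

/-- Action of a permutation of `ℕ` on sequences. -/
def permNat (σ : Equiv.Perm ℕ) : (ℕ → 𝕏) → (ℕ → 𝕏) := fun f k => f (σ k)

lemma measurable_permNat {σ : Equiv.Perm ℕ} : Measurable (permNat (𝕏 := 𝕏) σ) :=
  measurable_pi_lambda _ (fun _ => measurable_pi_apply _)

/-- Extension of a permutation of `Fin n` to a permutation of `ℕ`. -/
def extPerm {n : ℕ} (σ : Equiv.Perm (Fin n)) : Equiv.Perm ℕ where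
  toFun k := if h : k < n then (σ ⟨k, h⟩ : ℕ) else k
  invFun k := if h : k < n then (σ⁻¹ ⟨k, h⟩ : ℕ) else k
  left_inv k := by
    by_cases h : k < n
    · simp only [dif_pos h, Fin.is_lt, dif_pos, Fin.eta, Equiv.Perm.inv_def, Equiv.symm_apply_apply]
    · simp only [dif_neg h]
  right_inv k := by
    by_cases h : k < n
    · simp only [dif_pos h, Fin.is_lt, dif_pos, Fin.eta, Equiv.Perm.inv_def, Equiv.apply_symm_apply]
    · simp only [dif_neg h]

lemma extPerm_support {n : ℕ} (σ : Equiv.Perm (Fin n)) :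
    {k | extPerm σ k ≠ k}.Finite := by
  refine (Set.finite_Iio n).subset ?_
  intro k hk
  simp only [Set.mem_setOf_eq, extPerm, Equiv.coe_fn_mk] at hk
  by_contra hlt
  exact hk (dif_neg (by simpa using hlt))

lemma extPerm_apply_lt {n : ℕ} (σ : Equiv.Perm (Fin n)) (i : Fin n) :
    extPerm σ (i : ℕ) = (σ i : ℕ) := by
  simp only [extPerm, Equiv.coe_fn_mk, dif_pos i.is_lt, Fin.eta]

lemma extPerm_apply_ge {n : ℕ} (σ : Equiv.Perm (Fin n)) {k : ℕ} (hk : ¬ k < n) :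
    extPerm σ k = k := by
  simp only [extPerm, Equiv.coe_fn_mk, dif_neg hk]

lemma res_permNat {n : ℕ} (σ : Equiv.Perm (Fin n)) (f : ℕ → 𝕏) :
    res n (permNat (extPerm σ) f) = pmap σ (res n f) := by
  funext i
  simp only [res, permNat, pmap, extPerm_apply_lt]

variable (L : Measure (ℕ → 𝕏)) [IsProbabilityMeasure L]

/-- Finite-dimensional marginal. -/
noncomputable def Lm (n : ℕ) : Measure (Fin n → 𝕏) := L.map (res n)

instance {n : ℕ} : IsProbabilityMeasure (Lm L n) :=
  Measure.isProbabilityMeasure_map measurable_res.aemeasurable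

section Pred

variable {P : (n : ℕ) → Kernel (Fin n → 𝕏) 𝕏} [∀ n, IsMarkovKernel (P n)]

/-- With a master identity, the marginals factorize. -/
lemma factorI (hM : ∀ n, L.map (en n) = Lm L n ⊗ₘ P n) (n : ℕ) :
    Lm L (n+1) = (Lm L n ⊗ₘ P n).map snocm := by
  rw [← hM n]
  rw [Measure.map_map measurable_snocm measurable_en]
  have : snocm ∘ en (𝕏 := 𝕏) n = res (n+1) := funext (snocm_en n)
  rw [this]
  rfl

lemma measurable_snocSlice {n : ℕ} {S : Set (Fin (n+1) → 𝕏)} (hS : MeasurableSet S) :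
    Measurable (fun x => P n x {y | Fin.snoc x y ∈ S}) := by
  have h : ∀ x : Fin n → 𝕏, {y | Fin.snoc x y ∈ S} = Prod.mk x ⁻¹' (snocm ⁻¹' S) := by
    intro x; rfl
  simp_rw [h]
  exact Kernel.measurable_kernel_prodMk_left (measurable_snocm hS)

lemma formulaF (hM : ∀ n, L.map (en n) = Lm L n ⊗ₘ P n) (n : ℕ)
    {S : Set (Fin (n+1) → 𝕏)} (hS : MeasurableSet S) :
    Lm L (n+1) S = ∫⁻ x, P n x {y | Fin.snoc x y ∈ S} ∂(Lm L n) := by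
  rw [factorI L hM n, Measure.map_apply measurable_snocm hS,
    Measure.compProd_apply (measurable_snocm hS)]
  rfl

end Pred

end FLRAux
end SecC

section SecD
open MeasureTheory ProbabilityTheory Set
namespace FLRAux

variable {𝕏 : Type*} [MeasurableSpace 𝕏]

lemma snoc_pmap_castSucc {n : ℕ} (a b : Fin n) (x : Fin n → 𝕏) (y : 𝕏) :
    pmap (Equiv.swap a.castSucc b.castSucc) (Fin.snoc x y)
      = Fin.snoc (pmap (Equiv.swap a b) x) y := by
  funext i
  refine Fin.lastCases ?_ ?_ i
  · have h1 : Fin.last n ≠ a.castSucc := (Fin.castSucc_lt_last a).ne'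
    have h2 : Fin.last n ≠ b.castSucc := (Fin.castSucc_lt_last b).ne'
    simp only [pmap, Equiv.swap_apply_of_ne_of_ne h1 h2, Fin.snoc_last]
  · intro j
    have h : Equiv.swap a.castSucc b.castSucc j.castSucc = (Equiv.swap a b j).castSucc :=
      (Fin.castSucc_injective n).swap_apply a b j
    simp only [pmap, h, Fin.snoc_castSucc]

lemma snoc_snoc_pmap_special {n : ℕ} (w : Fin n → 𝕏) (u y : 𝕏) :
    pmap (Equiv.swap (Fin.castSucc (Fin.last n)) (Fin.last (n+1)))
        (Fin.snoc (Fin.snoc w u) y)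
      = Fin.snoc (Fin.snoc w y) u := by
  funext i
  refine Fin.lastCases ?_ ?_ i
  · simp only [pmap, Equiv.swap_apply_right, Fin.snoc_castSucc, Fin.snoc_last]
  · intro j
    refine Fin.lastCases ?_ ?_ j
    · simp only [pmap, Equiv.swap_apply_left, Fin.snoc_last, Fin.snoc_castSucc]
    · intro k
      have h1 : (k.castSucc : Fin (n+1)).castSucc ≠ Fin.castSucc (Fin.last n) :=
        fun h => (Fin.castSucc_lt_last k).ne (Fin.castSucc_injective _ h)
      have h2 : (k.castSucc : Fin (n+1)).castSucc ≠ Fin.last (n+1) :=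
        (Fin.castSucc_lt_last _).ne
      simp only [pmap, Equiv.swap_apply_of_ne_of_ne h1 h2, Fin.snoc_castSucc]

variable (L : Measure (ℕ → 𝕏)) [IsProbabilityMeasure L]
variable {P : (n : ℕ) → Kernel (Fin n → 𝕏) 𝕏} [∀ n, IsMarkovKernel (P n)]

lemma invCS
    (hM : ∀ n, L.map (en n) = Lm L n ⊗ₘ P n)
    (hsym : ∀ (n : ℕ) (σ : Equiv.Perm (Fin n)) (x : Fin n → 𝕏) (A : Set 𝕏),
      MeasurableSet A → P n (pmap σ x) A = P n x A)
    {n : ℕ} (ih : ∀ σ : Equiv.Perm (Fin n), (Lm L n).map (pmap σ) = Lm L n)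
    (a b : Fin n) :
    (Lm L (n+1)).map (pmap (Equiv.swap a.castSucc b.castSucc)) = Lm L (n+1) := by
  set s := Equiv.swap a b with hs
  ext S hS
  rw [Measure.map_apply measurable_pmap hS]
  rw [formulaF L hM n (measurable_pmap hS), formulaF L hM n hS]
  have hmeas : ∀ x : Fin n → 𝕏, MeasurableSet {y | Fin.snoc x y ∈ S} := by
    intro x
    exact measurable_prodMk_left (measurable_snocm hS)
  have hptwise : ∀ x : Fin n → 𝕏,
      P n x {y | Fin.snoc x y ∈ pmap (Equiv.swap a.castSucc b.castSucc) ⁻¹' S}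
        = P n (pmap s x) {y | Fin.snoc (pmap s x) y ∈ S} := by
    intro x
    have h1 : {y | Fin.snoc x y ∈ pmap (Equiv.swap a.castSucc b.castSucc) ⁻¹' S}
        = {y | Fin.snoc (pmap s x) y ∈ S} := by
      ext y
      simp only [mem_setOf_eq, mem_preimage, snoc_pmap_castSucc, hs]
    rw [h1, hsym n s (x := x) _ (hmeas _)]
  calc ∫⁻ x, P n x {y | Fin.snoc x y ∈ pmap (Equiv.swap a.castSucc b.castSucc) ⁻¹' S} ∂(Lm L n)
      = ∫⁻ x, P n (pmap s x) {y | Fin.snoc (pmap s x) y ∈ S} ∂(Lm L n) :=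
        lintegral_congr hptwise
    _ = ∫⁻ x, P n x {y | Fin.snoc x y ∈ S} ∂((Lm L n).map (pmap s)) :=
        (lintegral_map (measurable_snocSlice (P := P) hS) measurable_pmap).symm
    _ = ∫⁻ x, P n x {y | Fin.snoc x y ∈ S} ∂(Lm L n) := by rw [ih s]

lemma invSpecial
    (hM : ∀ n, L.map (en n) = Lm L n ⊗ₘ P n)
    (hii : ∀ (n : ℕ) (x : Fin n → 𝕏) (A B : Set 𝕏), MeasurableSet A → MeasurableSet B →
      ∫⁻ y in A, P (n + 1) (Fin.snoc x y) B ∂(P n x)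
        = ∫⁻ y in B, P (n + 1) (Fin.snoc x y) A ∂(P n x))
    (n : ℕ) :
    (Lm L (n+2)).map (pmap (Equiv.swap (Fin.castSucc (Fin.last n)) (Fin.last (n+1))))
      = Lm L (n+2) := by
  classical
  -- the two-step kernel
  have hsnocr : ∀ w : Fin n → 𝕏, Measurable (fun u : 𝕏 => snocm (w, u)) := by
    intro w
    exact measurable_snocm.comp (measurable_const.prodMk measurable_id)
  set K : (Fin n → 𝕏) → Kernel 𝕏 𝕏 :=
    fun w => (P (n+1)).comap (fun u : 𝕏 => snocm (w, u)) (hsnocr w) with hK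
  have hKapp : ∀ w u, K w u = P (n+1) (Fin.snoc w u) := fun w u => rfl
  have hKmarkov : ∀ w, IsMarkovKernel (K w) := fun w => by
    rw [hK]; infer_instance
  have hmE : ∀ (w : Fin n → 𝕏), Measurable (fun p : 𝕏 × 𝕏 => snocm (snocm (w, p.1), p.2)) := by
    intro w
    refine measurable_snocm.comp (Measurable.prodMk ?_ measurable_snd)
    exact measurable_snocm.comp (measurable_const.prodMk measurable_fst)
  -- master formula
  have key : ∀ S : Set (Fin (n+2) → 𝕏), MeasurableSet S →
      Lm L (n+2) S = ∫⁻ w, ((P n w) ⊗ₘ K w)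
        ((fun p : 𝕏 × 𝕏 => snocm (snocm (w, p.1), p.2)) ⁻¹' S) ∂(Lm L n) := by
    intro S hS
    have hg : Measurable (fun z : Fin (n+1) → 𝕏 => P (n+1) z {y | Fin.snoc z y ∈ S}) :=
      measurable_snocSlice (P := P) hS
    rw [formulaF L hM (n+1) hS]
    rw [factorI L hM n]
    rw [lintegral_map hg measurable_snocm]
    have hgm : Measurable (fun p : (Fin n → 𝕏) × 𝕏 =>
        P (n+1) (snocm p) {y | Fin.snoc (snocm p) y ∈ S}) := hg.comp measurable_snocm
    rw [Measure.lintegral_compProd hgm]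
    refine lintegral_congr (fun w => ?_)
    haveI := hKmarkov w
    have hmeasE : MeasurableSet ((fun p : 𝕏 × 𝕏 => snocm (snocm (w, p.1), p.2)) ⁻¹' S) :=
      hmE w hS
    rw [Measure.compProd_apply hmeasE]
    refine lintegral_congr (fun u => ?_)
    rw [hKapp]
    rfl
  -- swap symmetry of the two-step measure
  have hswap : ∀ w : Fin n → 𝕏,
      ((P n w) ⊗ₘ K w).map Prod.swap = (P n w) ⊗ₘ K w := by
    intro w
    haveI := hKmarkov w
    refine prod_ext (fun A B hA hB => ?_)
    rw [Measure.map_apply measurable_swap (hA.prod hB)]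
    have h1 : Prod.swap ⁻¹' (A ×ˢ B) = B ×ˢ A := by
      ext p; simp [Set.mem_prod, and_comm]
    rw [h1, Measure.compProd_apply_prod hB hA, Measure.compProd_apply_prod hA hB]
    simp only [hKapp]
    exact hii n w B A hB hA
  -- conclude
  ext S hS
  rw [Measure.map_apply measurable_pmap hS]
  rw [key _ (measurable_pmap hS), key S hS]
  refine lintegral_congr (fun w => ?_)
  haveI := hKmarkov w
  have hmeasE : MeasurableSet ((fun p : 𝕏 × 𝕏 => snocm (snocm (w, p.1), p.2)) ⁻¹' S) :=
    hmE w hS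
  have h1 : ((fun p : 𝕏 × 𝕏 => snocm (snocm (w, p.1), p.2)) ⁻¹'
        (pmap (Equiv.swap (Fin.castSucc (Fin.last n)) (Fin.last (n+1))) ⁻¹' S))
      = Prod.swap ⁻¹' ((fun p : 𝕏 × 𝕏 => snocm (snocm (w, p.1), p.2)) ⁻¹' S) := by
    ext p
    simp only [mem_preimage, Prod.swap, snocm_apply, snoc_snoc_pmap_special]
  rw [h1, ← Measure.map_apply measurable_swap hmeasE, hswap w]

/-- All finite marginals are invariant under permutations. -/
lemma invAll
    (hM : ∀ n, L.map (en n) = Lm L n ⊗ₘ P n)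
    (hsym : ∀ (n : ℕ) (σ : Equiv.Perm (Fin n)) (x : Fin n → 𝕏) (A : Set 𝕏),
      MeasurableSet A → P n (pmap σ x) A = P n x A)
    (hii : ∀ (n : ℕ) (x : Fin n → 𝕏) (A B : Set 𝕏), MeasurableSet A → MeasurableSet B →
      ∫⁻ y in A, P (n + 1) (Fin.snoc x y) B ∂(P n x)
        = ∫⁻ y in B, P (n + 1) (Fin.snoc x y) A ∂(P n x)) :
    ∀ n (σ : Equiv.Perm (Fin n)), (Lm L n).map (pmap σ) = Lm L n := by
  intro n
  induction n with
  | zero =>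
    intro σ
    have : pmap (𝕏 := 𝕏) σ = id := funext fun x => funext fun i => i.elim0
    rw [this, Measure.map_id]
  | succ n ih =>
    -- first, all swaps
    have hswap : ∀ x y : Fin (n+1), x ≠ y →
        (Lm L (n+1)).map (pmap (Equiv.swap x y)) = Lm L (n+1) := by
      have hlast : ∀ a : Fin n,
          (Lm L (n+1)).map (pmap (Equiv.swap a.castSucc (Fin.last n))) = Lm L (n+1) := by
        intro a
        match n, a with
        | (m+1), a =>
          by_cases ha : a = Fin.last m
          · subst ha
            exact invSpecial L hM hii m
          · -- conjugation
            set u := a.castSucc with hu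
            set w := (Fin.last m).castSucc with hw
            set v := Fin.last (m+1) with hv
            have huw : u ≠ w := fun h => ha (Fin.castSucc_injective _ h)
            have hwv : w ≠ v := (Fin.castSucc_lt_last _).ne
            have huv : u ≠ v := (Fin.castSucc_lt_last _).ne
            -- swap w u * swap v w * swap w u = swap u v
            have hconj : Equiv.swap w u * Equiv.swap v w * Equiv.swap w u
                = Equiv.swap u v :=
              Equiv.swap_mul_swap_mul_swap (x := v) (y := w) (z := u) hwv.symm huv.symm
            have h1 : (Lm L (m+2)).map (pmap (Equiv.swap w u)) = Lm L (m+2) :=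
              invCS L hM hsym ih (Fin.last m) a
            have h2 : (Lm L (m+2)).map (pmap (Equiv.swap v w)) = Lm L (m+2) := by
              rw [Equiv.swap_comm]
              exact invSpecial L hM hii m
            have hcomp : pmap (𝕏 := 𝕏) (Equiv.swap w u * Equiv.swap v w * Equiv.swap w u)
                = pmap (Equiv.swap w u) ∘ pmap (Equiv.swap v w) ∘ pmap (Equiv.swap w u) := by
              funext z
              simp only [Function.comp_apply, pmap_pmap]
            rw [← hconj, hcomp]
            rw [← Measure.map_map measurable_pmap (measurable_pmap.comp measurable_pmap)]
            rw [← Measure.map_map measurable_pmap measurable_pmap]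
            rw [h1, h2, h1]
      intro x y hxy
      rcases Fin.eq_castSucc_or_eq_last x with ⟨a, rfl⟩ | rfl
      · rcases Fin.eq_castSucc_or_eq_last y with ⟨b, rfl⟩ | rfl
        · exact invCS L hM hsym ih a b
        · exact hlast a
      · rcases Fin.eq_castSucc_or_eq_last y with ⟨b, rfl⟩ | rfl
        · rw [Equiv.swap_comm]
          exact hlast b
        · exact absurd rfl hxy
    intro σ
    refine Equiv.Perm.swap_induction_on σ ?_ ?_
    · rw [pmap_one, Measure.map_id]
    · intro f x y hxy ihf
      have hcomp : pmap (𝕏 := 𝕏) (Equiv.swap x y * f)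
          = pmap f ∘ pmap (Equiv.swap x y) := by
        funext z
        simp only [Function.comp_apply, pmap_pmap]
      rw [hcomp, ← Measure.map_map measurable_pmap measurable_pmap,
        hswap x y hxy, ihf]

end FLRAux
end SecD

section SecE
open MeasureTheory ProbabilityTheory Set
namespace FLRAux

variable {𝕏 : Type*} [MeasurableSpace 𝕏]
variable (L : Measure (ℕ → 𝕏)) [IsProbabilityMeasure L]

lemma exchangeable_of_invAll
    (hinv : ∀ n (σ : Equiv.Perm (Fin n)), (Lm L n).map (pmap σ) = Lm L n)
    (σ : Equiv.Perm ℕ) (hσ : {k | σ k ≠ k}.Finite) :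
    L.map (permNat σ) = L := by
  classical
  haveI : IsProbabilityMeasure (L.map (permNat σ)) :=
    Measure.isProbabilityMeasure_map measurable_permNat.aemeasurable
  refine ext_of_generate_finite _ generateFrom_measurableCylinders.symm
    isPiSystem_measurableCylinders ?_ (by simp)
  intro t ht
  obtain ⟨s, T, hT, rfl⟩ := (mem_measurableCylinders t).1 ht
  set N : ℕ := (s ∪ hσ.toFinset).sup id + 1 with hN
  have hsN : ∀ i ∈ s, i < N := by
    intro i hi
    have : i ≤ (s ∪ hσ.toFinset).sup id := Finset.le_sup (f := id) (Finset.mem_union_left _ hi)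
    omega
  have hsupp : ∀ k, σ k ≠ k → k < N := by
    intro k hk
    have : k ≤ (s ∪ hσ.toFinset).sup id :=
      Finset.le_sup (f := id) (Finset.mem_union_right _ (hσ.mem_toFinset.2 hk))
    omega
  have hmapsto : ∀ k, k < N → σ k < N := by
    intro k hk
    by_cases h : σ k = k
    · rwa [h]
    · refine hsupp (σ k) ?_
      intro h2
      exact h (σ.injective h2)
  have hmapsto' : ∀ k, k < N → σ⁻¹ k < N := by
    intro k hk
    by_cases h : σ⁻¹ k = k
    · rwa [h]
    · refine hsupp (σ⁻¹ k) ?_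
      rw [Equiv.Perm.inv_def, Equiv.apply_symm_apply]
      exact fun h2 => h h2.symm
  set σ' : Equiv.Perm (Fin N) :=
    { toFun := fun i => ⟨σ i, hmapsto i i.is_lt⟩
      invFun := fun i => ⟨σ⁻¹ i, hmapsto' i i.is_lt⟩
      left_inv := fun i => by
        ext
        simp
      right_inv := fun i => by
        ext
        simp } with hσ'
  set projm : (Fin N → 𝕏) → (∀ i : s, 𝕏) := fun x i => x ⟨i.1, hsN i.1 i.2⟩ with hprojm
  have hprojm_meas : Measurable projm :=
    measurable_pi_lambda _ (fun _ => measurable_pi_apply _)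
  have hcyl : (cylinder s T : Set (ℕ → 𝕏)) = res N ⁻¹' (projm ⁻¹' T) := by
    ext f
    simp only [mem_cylinder, mem_preimage]
    rfl
  have hcylm : MeasurableSet (cylinder s T : Set (ℕ → 𝕏)) := by
    rw [hcyl]
    exact measurable_res (hprojm_meas hT)
  rw [Measure.map_apply measurable_permNat hcylm, hcyl]
  have hpre : permNat σ ⁻¹' (res N ⁻¹' (projm ⁻¹' T))
      = res N ⁻¹' (pmap σ' ⁻¹' (projm ⁻¹' T)) := by
    ext f
    simp only [mem_preimage]
    have : projm (res N (permNat σ f)) = projm (pmap σ' (res N f)) := rfl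
    rw [this]
  rw [hpre]
  have h1 : L (res N ⁻¹' (pmap σ' ⁻¹' (projm ⁻¹' T)))
      = Lm L N (pmap σ' ⁻¹' (projm ⁻¹' T)) := by
    rw [Lm, Measure.map_apply measurable_res (measurable_pmap (hprojm_meas hT))]
  have h2 : L (res N ⁻¹' (projm ⁻¹' T)) = Lm L N (projm ⁻¹' T) := by
    rw [Lm, Measure.map_apply measurable_res (hprojm_meas hT)]
  rw [h1, h2]
  calc Lm L N (pmap σ' ⁻¹' (projm ⁻¹' T))
      = (Lm L N).map (pmap σ') (projm ⁻¹' T) :=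
        (Measure.map_apply measurable_pmap (hprojm_meas hT)).symm
    _ = Lm L N (projm ⁻¹' T) := by rw [hinv N σ']

end FLRAux
end SecE

section SecF1
open MeasureTheory ProbabilityTheory Set
open scoped ENNReal
namespace FLRAux

variable {𝕏 : Type*} [MeasurableSpace 𝕏] [StandardBorelSpace 𝕏] [Nonempty 𝕏]

/-- A fixed measurable embedding into `ℝ`. -/
noncomputable def emb : 𝕏 → ℝ := MeasureTheory.embeddingReal 𝕏

lemma emb_meas : Measurable (emb (𝕏 := 𝕏)) :=
  (MeasureTheory.measurableEmbedding_embeddingReal 𝕏).measurable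

lemma emb_inj : Function.Injective (emb (𝕏 := 𝕏)) :=
  (MeasureTheory.measurableEmbedding_embeddingReal 𝕏).injective

def jm (n : ℕ) : (ℕ → 𝕏) → (Fin n → 𝕏) × (𝕏 × 𝕏) := fun f => (res n f, (f n, f (n+1)))

lemma measurable_jm {n : ℕ} : Measurable (jm (𝕏 := 𝕏) n) :=
  measurable_res.prodMk ((measurable_pi_apply n).prodMk (measurable_pi_apply (n+1)))

variable (L : Measure (ℕ → 𝕏)) [IsProbabilityMeasure L]

noncomputable def Jm (n : ℕ) : Measure ((Fin n → 𝕏) × (𝕏 × 𝕏)) := L.map (jm n)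

instance {n : ℕ} : IsProbabilityMeasure (Jm L n) :=
  Measure.isProbabilityMeasure_map measurable_jm.aemeasurable

lemma fst_Jm (n : ℕ) : (Jm L n).fst = Lm L n := by
  have h : Jm L n = L.map (fun f => (res n f, (f n, f (n+1)))) := rfl
  rw [h]
  exact Measure.fst_map_prodMk ((measurable_pi_apply n).prodMk (measurable_pi_apply (n+1)))

section Invariance

variable (hexch : ∀ σ : Equiv.Perm ℕ, {k | σ k ≠ k}.Finite → L.map (permNat σ) = L)
include hexch

lemma invLm (n : ℕ) (σ : Equiv.Perm (Fin n)) : (Lm L n).map (pmap σ) = Lm L n := by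
  rw [Lm, Measure.map_map measurable_pmap measurable_res]
  have h : pmap (𝕏 := 𝕏) σ ∘ res n = res n ∘ permNat (extPerm σ) :=
    funext fun f => (res_permNat σ f).symm
  rw [h, ← Measure.map_map measurable_res measurable_permNat,
    hexch _ (extPerm_support σ)]

lemma invJmFst (n : ℕ) (σ : Equiv.Perm (Fin n)) :
    (Jm L n).map (Prod.map (pmap σ) id) = Jm L n := by
  have hmp : Measurable (Prod.map (pmap (𝕏 := 𝕏) σ) (id : 𝕏 × 𝕏 → 𝕏 × 𝕏)) :=
    measurable_pmap.prodMap measurable_id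
  rw [Jm, Measure.map_map hmp measurable_jm]
  have h : (Prod.map (pmap σ) id) ∘ jm n = jm (𝕏 := 𝕏) n ∘ permNat (extPerm σ) := by
    funext f
    refine Prod.ext ?_ ?_
    · exact (res_permNat σ f).symm
    · have h1 : extPerm σ n = n := extPerm_apply_ge σ (lt_irrefl n)
      have h2 : extPerm σ (n+1) = n + 1 := extPerm_apply_ge σ (by omega)
      simp only [jm, Function.comp_apply, permNat, Prod.map, h1, h2, id]
  rw [h, ← Measure.map_map measurable_jm measurable_permNat, hexch _ (extPerm_support σ)]

lemma invJmSwap (n : ℕ) :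
    (Jm L n).map (Prod.map (id : (Fin n → 𝕏) → (Fin n → 𝕏)) Prod.swap) = Jm L n := by
  have hmp : Measurable (Prod.map (id : (Fin n → 𝕏) → (Fin n → 𝕏))
      (Prod.swap : 𝕏 × 𝕏 → 𝕏 × 𝕏)) := measurable_id.prodMap measurable_swap
  set τ : Equiv.Perm ℕ := Equiv.swap n (n+1) with hτ
  have hτfin : {k | τ k ≠ k}.Finite := by
    refine ((Set.finite_singleton n).insert (n+1)).subset ?_
    intro k hk
    simp only [Set.mem_setOf_eq, hτ] at hk
    by_contra hknot
    simp only [Set.mem_insert_iff, Set.mem_singleton_iff] at hknot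
    push_neg at hknot
    exact hk (Equiv.swap_apply_of_ne_of_ne hknot.2 hknot.1)
  rw [Jm, Measure.map_map hmp measurable_jm]
  have h : (Prod.map (id : (Fin n → 𝕏) → _) Prod.swap) ∘ jm n = jm (𝕏 := 𝕏) n ∘ permNat τ := by
    funext f
    refine Prod.ext ?_ ?_
    · funext i
      have hi1 : (i : ℕ) ≠ n := i.is_lt.ne
      have hi2 : (i : ℕ) ≠ n + 1 := by omega
      simp only [jm, Function.comp_apply, permNat, Prod.map, id, res,
        hτ, Equiv.swap_apply_of_ne_of_ne hi1 hi2]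
    · simp only [jm, Function.comp_apply, permNat, Prod.map, hτ,
        Equiv.swap_apply_left, Equiv.swap_apply_right, Prod.swap]
  rw [h, ← Measure.map_map measurable_jm measurable_permNat, hexch _ hτfin]

end Invariance

/-- Conditional distribution of the next two values given the first `n`. -/
noncomputable def rho (n : ℕ) : Kernel (Fin n → 𝕏) (𝕏 × 𝕏) := (Jm L n).condKernel

instance {n : ℕ} : IsMarkovKernel (rho L n) := by
  rw [rho]; infer_instance

lemma ver_rho (n : ℕ) : Lm L n ⊗ₘ rho L n = Jm L n := by
  have h := (Jm L n).disintegrate (Jm L n).condKernel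
  rwa [fst_Jm] at h

lemma verRect {n : ℕ} {ν : Kernel (Fin n → 𝕏) (𝕏 × 𝕏)} [IsSFiniteKernel ν]
    (hver : Lm L n ⊗ₘ ν = Jm L n) {B : Set (Fin n → 𝕏)} {D : Set (𝕏 × 𝕏)}
    (hB : MeasurableSet B) (hD : MeasurableSet D) :
    ∫⁻ x in B, ν x D ∂(Lm L n) = Jm L n (B ×ˢ D) := by
  rw [← hver, Measure.compProd_apply_prod hB hD]

lemma ver_pmap
    (hexch : ∀ σ : Equiv.Perm ℕ, {k | σ k ≠ k}.Finite → L.map (permNat σ) = L)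
    {n : ℕ} {ν : Kernel (Fin n → 𝕏) (𝕏 × 𝕏)} [IsSFiniteKernel ν]
    (hver : Lm L n ⊗ₘ ν = Jm L n) (σ : Equiv.Perm (Fin n))
    {B : Set (Fin n → 𝕏)} {D : Set (𝕏 × 𝕏)}
    (hB : MeasurableSet B) (hD : MeasurableSet D) :
    ∫⁻ x in B, ν (pmap σ x) D ∂(Lm L n) = Jm L n (B ×ˢ D) := by
  set B₂ : Set (Fin n → 𝕏) := pmap σ⁻¹ ⁻¹' B with hB₂def
  have hB₂ : MeasurableSet B₂ := measurable_pmap hB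
  have hpre : pmap (𝕏 := 𝕏) σ ⁻¹' B₂ = B := by
    ext z
    simp only [hB₂def, mem_preimage, pmap_inv_pmap]
  calc ∫⁻ x in B, ν (pmap σ x) D ∂(Lm L n)
      = ∫⁻ x in pmap σ ⁻¹' B₂, ν (pmap σ x) D ∂(Lm L n) := by rw [hpre]
    _ = ∫⁻ y in B₂, ν y D ∂((Lm L n).map (pmap σ)) :=
        (setLIntegral_map hB₂ (Kernel.measurable_coe ν hD) measurable_pmap).symm
    _ = ∫⁻ y in B₂, ν y D ∂(Lm L n) := by rw [invLm L hexch n σ]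
    _ = Jm L n (B₂ ×ˢ D) := verRect L hver hB₂ hD
    _ = Jm L n (B ×ˢ D) := by
        conv_lhs => rw [← invJmFst L hexch n σ]
        rw [Measure.map_apply (measurable_pmap.prodMap measurable_id) (hB₂.prod hD)]
        congr 1
        ext p
        simp only [mem_preimage, Prod.map, mem_prod, id]
        rw [← hpre]
        simp [mem_preimage]

lemma ver_sort
    (hexch : ∀ σ : Equiv.Perm ℕ, {k | σ k ≠ k}.Finite → L.map (permNat σ) = L)
    {n : ℕ} {ν : Kernel (Fin n → 𝕏) (𝕏 × 𝕏)} [IsSFiniteKernel ν]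
    (hver : Lm L n ⊗ₘ ν = Jm L n)
    {B : Set (Fin n → 𝕏)} {D : Set (𝕏 × 𝕏)}
    (hB : MeasurableSet B) (hD : MeasurableSet D) :
    ∫⁻ x in B, ν (sortFn emb x) D ∂(Lm L n) = Jm L n (B ×ˢ D) := by
  classical
  set Dσ : Equiv.Perm (Fin n) → Set (Fin n → 𝕏) := fun σ => {z | sortPerm emb z = σ}
    with hDσdef
  have hDσmeas : ∀ σ, MeasurableSet (Dσ σ) := fun σ => measurableSet_sortPerm_eq emb_meas σ
  have hptwise : ∀ x, ν (sortFn emb x) D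
      = ∑ σ : Equiv.Perm (Fin n), (Dσ σ).indicator (fun z => ν (pmap σ z) D) x := by
    intro x
    rw [Finset.sum_eq_single (sortPerm emb x)]
    · simp only [indicator_of_mem, hDσdef, mem_setOf_eq, sortFn]
    · intro σ _ hσ
      refine indicator_of_notMem ?_ _
      simp only [hDσdef, mem_setOf_eq]
      exact fun h => hσ (h ▸ rfl)
    · intro h
      exact absurd (Finset.mem_univ _) h
  calc ∫⁻ x in B, ν (sortFn emb x) D ∂(Lm L n)
      = ∫⁻ x in B, ∑ σ : Equiv.Perm (Fin n),
          (Dσ σ).indicator (fun z => ν (pmap σ z) D) x ∂(Lm L n) := by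
        exact lintegral_congr (fun x => hptwise x)
    _ = ∑ σ : Equiv.Perm (Fin n), ∫⁻ x in B,
          (Dσ σ).indicator (fun z => ν (pmap σ z) D) x ∂(Lm L n) := by
        refine lintegral_finset_sum _ (fun σ _ => ?_)
        exact ((Kernel.measurable_coe ν hD).comp measurable_pmap).indicator (hDσmeas σ)
    _ = ∑ σ : Equiv.Perm (Fin n), Jm L n ((Dσ σ ∩ B) ×ˢ D) := by
        refine Finset.sum_congr rfl (fun σ _ => ?_)
        rw [lintegral_indicator (hDσmeas σ), Measure.restrict_restrict (hDσmeas σ)]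
        exact ver_pmap L hexch hver σ ((hDσmeas σ).inter hB) hD
    _ = Jm L n (B ×ˢ D) := by
        rw [← tsum_fintype (L := SummationFilter.unconditional _)]
        have hdisj : Pairwise (Function.onFun Disjoint
            (fun σ : Equiv.Perm (Fin n) => (Dσ σ ∩ B) ×ˢ D)) := by
          intro σ τ hστ
          refine Set.disjoint_left.2 ?_
          rintro ⟨z, p⟩ ⟨⟨hz1, _⟩, _⟩ ⟨⟨hz2, _⟩, _⟩
          exact hστ (hz1 ▸ hz2 ▸ rfl)
        rw [← measure_iUnion hdisj (fun σ => (((hDσmeas σ).inter hB).prod hD))]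
        congr 1
        rw [← Set.iUnion_prod_const]
        congr 1
        ext z
        simp only [mem_iUnion, mem_inter_iff, hDσdef, mem_setOf_eq]
        exact ⟨fun ⟨σ, _, h⟩ => h, fun h => ⟨sortPerm emb z, rfl, h⟩⟩

end FLRAux
end SecF1

section SecF2
open MeasureTheory ProbabilityTheory Set
open scoped ENNReal
namespace FLRAux

variable {𝕏 : Type*} [MeasurableSpace 𝕏] [StandardBorelSpace 𝕏] [Nonempty 𝕏]

/-- Symmetrization of a measure on a square. -/
noncomputable def symPair (m : Measure (𝕏 × 𝕏)) : Measure (𝕏 × 𝕏) :=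
  (2⁻¹ : ℝ≥0∞) • (m + m.map Prod.swap)

lemma symPair_apply (m : Measure (𝕏 × 𝕏)) {D : Set (𝕏 × 𝕏)} (hD : MeasurableSet D) :
    symPair m D = 2⁻¹ * (m D + m (Prod.swap ⁻¹' D)) := by
  simp [symPair, Measure.smul_apply, Measure.add_apply,
    Measure.map_apply measurable_swap hD, smul_eq_mul, mul_add]

lemma two_inv_double (a : ℝ≥0∞) : (2⁻¹ : ℝ≥0∞) * (a + a) = a := by
  rw [← two_mul, ← mul_assoc, ENNReal.inv_mul_cancel two_ne_zero ENNReal.ofNat_ne_top, one_mul]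

instance symPair_prob (m : Measure (𝕏 × 𝕏)) [IsProbabilityMeasure m] :
    IsProbabilityMeasure (symPair m) := by
  constructor
  rw [symPair_apply m MeasurableSet.univ]
  simp only [Set.preimage_univ, measure_univ]
  exact two_inv_double 1

lemma symPair_swap (m : Measure (𝕏 × 𝕏)) : (symPair m).map Prod.swap = symPair m := by
  unfold symPair
  rw [Measure.map_smul, Measure.map_add _ _ measurable_swap,
    Measure.map_map measurable_swap measurable_swap, Prod.swap_swap_eq, Measure.map_id,
    add_comm]

variable (L : Measure (ℕ → 𝕏)) [IsProbabilityMeasure L]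

/-- The symmetrized, sorted two-step predictive kernel. -/
noncomputable def nuhat (n : ℕ) : Kernel (Fin n → 𝕏) (𝕏 × 𝕏) :=
  ⟨fun x => symPair (rho L n (sortFn emb x)), by
    refine Measure.measurable_of_measurable_coe _ (fun D hD => ?_)
    simp_rw [symPair_apply _ hD]
    refine Measurable.const_mul (Measurable.add ?_ ?_) _
    · exact (Kernel.measurable_coe _ hD).comp (measurable_sortFn emb_meas)
    · exact (Kernel.measurable_coe _ (measurable_swap hD)).comp (measurable_sortFn emb_meas)⟩

lemma nuhat_apply (n : ℕ) (x : Fin n → 𝕏) :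
    nuhat L n x = symPair (rho L n (sortFn emb x)) := rfl

instance {n : ℕ} : IsMarkovKernel (nuhat L n) := by
  constructor
  intro x
  rw [nuhat_apply]
  infer_instance

lemma nuhat_pmap {n : ℕ} (τ : Equiv.Perm (Fin n)) (x : Fin n → 𝕏) :
    nuhat L n (pmap τ x) = nuhat L n x := by
  rw [nuhat_apply, nuhat_apply, sortFn_pmap emb_inj]

lemma nuhat_swap {n : ℕ} (x : Fin n → 𝕏) :
    (nuhat L n x).map Prod.swap = nuhat L n x := symPair_swap _

lemma ver_nuhat
    (hexch : ∀ σ : Equiv.Perm ℕ, {k | σ k ≠ k}.Finite → L.map (permNat σ) = L)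
    (n : ℕ) : Lm L n ⊗ₘ nuhat L n = Jm L n := by
  refine prod_ext (fun B D hB hD => ?_)
  rw [Measure.compProd_apply_prod hB hD]
  have hm1 : Measurable (fun x => rho L n (sortFn emb x) D) :=
    (Kernel.measurable_coe _ hD).comp (measurable_sortFn emb_meas)
  have hm2 : Measurable (fun x => rho L n (sortFn emb x) (Prod.swap ⁻¹' D)) :=
    (Kernel.measurable_coe _ (measurable_swap hD)).comp (measurable_sortFn emb_meas)
  have hswapJ : Jm L n (B ×ˢ (Prod.swap ⁻¹' D)) = Jm L n (B ×ˢ D) := by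
    have hpre : (Prod.map (id : (Fin n → 𝕏) → _) Prod.swap) ⁻¹' (B ×ˢ D)
        = B ×ˢ (Prod.swap ⁻¹' D) := by
      ext p
      simp [Prod.map, Set.mem_prod]
    rw [← hpre, ← Measure.map_apply (measurable_id.prodMap measurable_swap) (hB.prod hD),
      invJmSwap L hexch n]
  calc ∫⁻ x in B, nuhat L n x D ∂(Lm L n)
      = ∫⁻ x in B, 2⁻¹ * (rho L n (sortFn emb x) D
          + rho L n (sortFn emb x) (Prod.swap ⁻¹' D)) ∂(Lm L n) :=
        lintegral_congr (fun x => by rw [nuhat_apply, symPair_apply _ hD])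
    _ = 2⁻¹ * ((∫⁻ x in B, rho L n (sortFn emb x) D ∂(Lm L n))
          + ∫⁻ x in B, rho L n (sortFn emb x) (Prod.swap ⁻¹' D) ∂(Lm L n)) := by
        rw [lintegral_const_mul (f := fun x => rho L n (sortFn emb x) D
            + rho L n (sortFn emb x) (Prod.swap ⁻¹' D)) _ (hm1.add hm2), lintegral_add_left hm1]
    _ = 2⁻¹ * (Jm L n (B ×ˢ D) + Jm L n (B ×ˢ (Prod.swap ⁻¹' D))) := by
        rw [ver_sort L hexch (ver_rho L n) hB hD,
          ver_sort L hexch (ver_rho L n) hB (measurable_swap hD)]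
    _ = Jm L n (B ×ˢ D) := by rw [hswapJ, two_inv_double]

/-- The predictive kernel (before bad-set surgery). -/
noncomputable def Pg (n : ℕ) : Kernel (Fin n → 𝕏) 𝕏 := (nuhat L n).fst

instance {n : ℕ} : IsMarkovKernel (Pg L n) := by
  rw [Pg]; infer_instance

lemma Pg_pmap {n : ℕ} (τ : Equiv.Perm (Fin n)) (x : Fin n → 𝕏) :
    Pg L n (pmap τ x) = Pg L n x := by
  rw [Pg, Kernel.fst_apply, Kernel.fst_apply, nuhat_pmap]

lemma masterPg
    (hexch : ∀ σ : Equiv.Perm ℕ, {k | σ k ≠ k}.Finite → L.map (permNat σ) = L)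
    (n : ℕ) : L.map (en n) = Lm L n ⊗ₘ Pg L n := by
  haveI : IsProbabilityMeasure (L.map (en (𝕏 := 𝕏) n)) :=
    Measure.isProbabilityMeasure_map measurable_en.aemeasurable
  refine prod_ext (fun B A hB hA => ?_)
  rw [Measure.compProd_apply_prod hB hA]
  have h1 : ∀ x, Pg L n x A = nuhat L n x {p : 𝕏 × 𝕏 | p.1 ∈ A} := fun x =>
    Kernel.fst_apply' _ _ hA
  have hA' : MeasurableSet {p : 𝕏 × 𝕏 | p.1 ∈ A} := measurable_fst hA
  calc (L.map (en n)) (B ×ˢ A)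
      = L (en n ⁻¹' (B ×ˢ A)) := Measure.map_apply measurable_en (hB.prod hA)
    _ = L (jm n ⁻¹' (B ×ˢ {p : 𝕏 × 𝕏 | p.1 ∈ A})) := by
        have hseteq : en (𝕏 := 𝕏) n ⁻¹' (B ×ˢ A)
            = jm n ⁻¹' (B ×ˢ {p : 𝕏 × 𝕏 | p.1 ∈ A}) := by
          ext f
          simp [en, jm, Set.mem_prod]
        rw [hseteq]
    _ = Jm L n (B ×ˢ {p : 𝕏 × 𝕏 | p.1 ∈ A}) :=
        (Measure.map_apply measurable_jm (hB.prod hA')).symm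
    _ = ∫⁻ x in B, nuhat L n x {p : 𝕏 × 𝕏 | p.1 ∈ A} ∂(Lm L n) :=
        (verRect L (ver_nuhat L hexch n) hB hA').symm
    _ = ∫⁻ x in B, Pg L n x A ∂(Lm L n) :=
        lintegral_congr (fun x => (h1 x).symm)

/-- The conditional kernel of the two-step predictive kernel. -/
noncomputable def kc (n : ℕ) : Kernel ((Fin n → 𝕏) × 𝕏) 𝕏 := (nuhat L n).condKernel

instance {n : ℕ} : IsMarkovKernel (kc L n) := by
  rw [kc]; infer_instance

lemma PW (n : ℕ) (x : Fin n → 𝕏) {A B : Set 𝕏} (hA : MeasurableSet A)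
    (hB : MeasurableSet B) :
    ∫⁻ y in A, kc L n (x, y) B ∂(Pg L n x) = nuhat L n x (A ×ˢ B) := by
  have h := (nuhat L n).disintegrate (nuhat L n).condKernel
  conv_rhs => rw [← h]
  rw [Kernel.compProd_apply (hA.prod hB)]
  have hptwise : ∀ b, kc L n (x, b) {c | (b, c) ∈ A ×ˢ B}
      = A.indicator (fun b => kc L n (x, b) B) b := by
    intro b
    by_cases hb : b ∈ A
    · have : {c | (b, c) ∈ A ×ˢ B} = B := by
        ext c; simp [Set.mem_prod, hb]
      rw [this, Set.indicator_of_mem hb]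
    · have : {c | (b, c) ∈ A ×ˢ B} = ∅ := by
        ext c; simp [Set.mem_prod, hb]
      rw [this, Set.indicator_of_notMem hb, measure_empty]
  calc ∫⁻ y in A, kc L n (x, y) B ∂(Pg L n x)
      = ∫⁻ y, A.indicator (fun b => kc L n (x, b) B) y ∂(Pg L n x) :=
        (lintegral_indicator hA _).symm
    _ = ∫⁻ b, kc L n (x, b) {c | (b, c) ∈ A ×ˢ B} ∂((nuhat L n).fst x) :=
        lintegral_congr (fun b => (hptwise b).symm)

end FLRAux
end SecF2

section SecF3
open MeasureTheory ProbabilityTheory Set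
open scoped ENNReal
namespace FLRAux

variable {𝕏 : Type*} [MeasurableSpace 𝕏] [StandardBorelSpace 𝕏] [Nonempty 𝕏]

def dm (n : ℕ) : (Fin (n+1) → 𝕏) → (Fin n → 𝕏) × 𝕏 := fun z => (Fin.init z, z (Fin.last n))

lemma measurable_dm {n : ℕ} : Measurable (dm (𝕏 := 𝕏) n) := by
  refine Measurable.prodMk ?_ (measurable_pi_apply _)
  exact measurable_pi_lambda _ (fun i => measurable_pi_apply _)

lemma dm_snocm {n : ℕ} (p : (Fin n → 𝕏) × 𝕏) : dm n (snocm p) = p := by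
  cases p with
  | mk x y => simp [dm, snocm, Fin.init_snoc, Fin.snoc_last]

variable (L : Measure (ℕ → 𝕏)) [IsProbabilityMeasure L]

lemma ae_match
    (hexch : ∀ σ : Equiv.Perm ℕ, {k | σ k ≠ k}.Finite → L.map (permNat σ) = L)
    (n : ℕ) :
    ∀ᵐ z ∂(Lm L (n+1)), Pg L (n+1) z = kc L n (dm n z) := by
  haveI : ∀ k, IsMarkovKernel (Pg L k) := fun k => inferInstance
  set G₂ : Kernel (Fin (n+1) → 𝕏) 𝕏 := (kc L n).comap (dm n) measurable_dm with hG₂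
  haveI : IsMarkovKernel G₂ := by rw [hG₂]; infer_instance
  set ρ' : Measure ((Fin (n+1) → 𝕏) × 𝕏) := L.map (en (n+1)) with hρ'
  haveI : IsProbabilityMeasure ρ' := Measure.isProbabilityMeasure_map measurable_en.aemeasurable
  have hfst : ρ'.fst = Lm L (n+1) := by
    have h : ρ' = L.map (fun f => (res (n+1) f, f (n+1))) := rfl
    rw [h]
    exact Measure.fst_map_prodMk (measurable_pi_apply _)
  have h1 : ρ' = ρ'.fst ⊗ₘ Pg L (n+1) := by
    rw [hfst, hρ', masterPg L hexch (n+1)]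
  have h2 : ρ' = ρ'.fst ⊗ₘ G₂ := by
    rw [hfst]
    refine prod_ext (fun B' A hB' hA => ?_)
    have hslice : ∀ x : Fin n → 𝕏, MeasurableSet {y : 𝕏 | Fin.snoc x y ∈ B'} :=
      fun x => measurable_prodMk_left (measurable_snocm hB')
    have hindmeas : Measurable (fun z : Fin (n+1) → 𝕏 =>
        B'.indicator (fun z => kc L n (dm n z) A) z) :=
      ((Kernel.measurable_coe _ hA).comp measurable_dm).indicator hB'
    have step1 : (Lm L (n+1) ⊗ₘ G₂) (B' ×ˢ A)
        = ∫⁻ z in B', kc L n (dm n z) A ∂(Lm L (n+1)) := by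
      rw [Measure.compProd_apply_prod hB' hA]
      refine lintegral_congr (fun z => ?_)
      rw [hG₂, Kernel.comap_apply]
    have step2 : ∫⁻ z in B', kc L n (dm n z) A ∂(Lm L (n+1))
        = ∫⁻ x, nuhat L n x ({y | Fin.snoc x y ∈ B'} ×ˢ A) ∂(Lm L n) := by
      rw [← lintegral_indicator hB', factorI L (masterPg L hexch) n]
      have hgm : Measurable (fun p : (Fin n → 𝕏) × 𝕏 =>
          B'.indicator (fun z => kc L n (dm n z) A) (snocm p)) :=
        hindmeas.comp measurable_snocm
      rw [lintegral_map hindmeas measurable_snocm, Measure.lintegral_compProd hgm]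
      refine lintegral_congr (fun x => ?_)
      have hin : ∀ y, B'.indicator (fun z => kc L n (dm n z) A) (snocm (x, y))
          = {y : 𝕏 | Fin.snoc x y ∈ B'}.indicator (fun y => kc L n (x, y) A) y := by
        intro y
        by_cases hy : Fin.snoc x y ∈ B'
        · have hy' : snocm (x, y) ∈ B' := hy
          have hy2 : y ∈ {y : 𝕏 | Fin.snoc x y ∈ B'} := hy
          rw [Set.indicator_of_mem hy' _, Set.indicator_of_mem hy2, dm_snocm]
        · have hy' : snocm (x, y) ∉ B' := hy
          have hy2 : y ∉ {y : 𝕏 | Fin.snoc x y ∈ B'} := hy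
          rw [Set.indicator_of_notMem hy' _, Set.indicator_of_notMem hy2]
      calc ∫⁻ y, B'.indicator (fun z => kc L n (dm n z) A) (snocm (x, y)) ∂(Pg L n x)
          = ∫⁻ y, {y : 𝕏 | Fin.snoc x y ∈ B'}.indicator
              (fun y => kc L n (x, y) A) y ∂(Pg L n x) := lintegral_congr hin
        _ = ∫⁻ y in {y : 𝕏 | Fin.snoc x y ∈ B'}, kc L n (x, y) A ∂(Pg L n x) :=
            lintegral_indicator (hslice x) _
        _ = nuhat L n x ({y | Fin.snoc x y ∈ B'} ×ˢ A) := PW L n x (hslice x) hA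
    have step3 : ρ' (B' ×ˢ A)
        = ∫⁻ x, nuhat L n x ({y | Fin.snoc x y ∈ B'} ×ˢ A) ∂(Lm L n) := by
      have hEm : Measurable (fun q : (Fin n → 𝕏) × (𝕏 × 𝕏) => (snocm (q.1, q.2.1), q.2.2)) :=
        (measurable_snocm.comp
          (measurable_fst.prodMk (measurable_fst.comp measurable_snd))).prodMk
          (measurable_snd.comp measurable_snd)
      set E : Set ((Fin n → 𝕏) × (𝕏 × 𝕏)) :=
        (fun q : (Fin n → 𝕏) × (𝕏 × 𝕏) => (snocm (q.1, q.2.1), q.2.2)) ⁻¹' (B' ×ˢ A) with hE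
      have hEmeas : MeasurableSet E := hEm (hB'.prod hA)
      have e1 : ρ' (B' ×ˢ A) = Jm L n E := by
        rw [hρ', Measure.map_apply measurable_en (hB'.prod hA), Jm,
          Measure.map_apply measurable_jm hEmeas]
        congr 1
        ext f
        simp only [hE, en, jm, mem_preimage, Set.mem_prod, mem_setOf_eq]
        rw [show snocm (res n f, f n) = res (n+1) f from snocm_en n f]
      rw [e1, ← ver_nuhat L hexch n, Measure.compProd_apply hEmeas]
      refine lintegral_congr (fun x => ?_)
      congr 1
    rw [step1, step2, ← step3]
  have e1 := eq_condKernel_of_measure_eq_compProd (Pg L (n+1)) h1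
  have e2 := eq_condKernel_of_measure_eq_compProd G₂ h2
  rw [hfst] at e1 e2
  filter_upwards [e1, e2] with z hz1 hz2
  rw [hz1, ← hz2, hG₂, Kernel.comap_apply]

end FLRAux
end SecF3

section SecF4
open MeasureTheory ProbabilityTheory Set
open scoped ENNReal
namespace FLRAux

variable {𝕏 : Type*} [MeasurableSpace 𝕏] [StandardBorelSpace 𝕏] [Nonempty 𝕏]
variable (L : Measure (ℕ → 𝕏)) [IsProbabilityMeasure L]

noncomputable def mismatch (n : ℕ) : Set (Fin n → 𝕏) :=
  match n with
  | 0 => ∅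
  | (m+1) => {z | Pg L (m+1) z ≠ kc L m (dm m z)}

lemma measurableSet_mismatch (n : ℕ) : MeasurableSet (mismatch L n) := by
  cases n with
  | zero => exact MeasurableSet.empty
  | succ m =>
    have h := (measurableSet_kernel_eq (Pg L (m+1))
      ((kc L m).comap (dm m) measurable_dm)).compl
    exact h

lemma null_mismatch
    (hexch : ∀ σ : Equiv.Perm ℕ, {k | σ k ≠ k}.Finite → L.map (permNat σ) = L)
    (n : ℕ) : Lm L n (mismatch L n) = 0 := by
  cases n with
  | zero => exact measure_empty
  | succ m => exact ae_iff.1 (ae_match L hexch m)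

lemma measurable_initFn {m : ℕ} : Measurable (fun z : Fin (m+1) → 𝕏 => Fin.init z) :=
  measurable_pi_lambda _ (fun _ => measurable_pi_apply _)

noncomputable def badIter : ℕ → (n : ℕ) → Set (Fin n → 𝕏)
  | 0, n => symSet (mismatch L n)
  | (j+1), n => (badIter j n
      ∪ symSet {x | Pg L n x {y | Fin.snoc x y ∈ badIter j (n+1)} ≠ 0})
      ∪ (match n with
        | 0 => (∅ : Set (Fin 0 → 𝕏))
        | (m+1) => symSet {z : Fin (m+1) → 𝕏 | Fin.init z ∈ badIter j m})

lemma measurable_leakFn {n : ℕ} {S : Set (Fin (n+1) → 𝕏)} (hS : MeasurableSet S) :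
    Measurable (fun x => Pg L n x {y | Fin.snoc x y ∈ S}) :=
  measurable_snocSlice (P := fun n => Pg L n) hS

lemma badIter_meas : ∀ j n, MeasurableSet (badIter L j n) := by
  intro j
  induction j with
  | zero =>
    intro n
    exact measurableSet_symSet (measurableSet_mismatch L n)
  | succ j ih =>
    intro n
    refine MeasurableSet.union (MeasurableSet.union (ih n) (measurableSet_symSet ?_)) ?_
    · exact (measurable_leakFn L (ih (n+1))) (measurableSet_singleton 0).compl
    · cases n with
      | zero => exact MeasurableSet.empty
      | succ m =>
        exact measurableSet_symSet (measurable_initFn (ih m))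

lemma badIter_sym : ∀ j n (τ : Equiv.Perm (Fin n)),
    pmap τ ⁻¹' badIter L j n = badIter L j n := by
  intro j
  induction j with
  | zero =>
    intro n τ
    exact pmap_preimage_symSet τ _
  | succ j ih =>
    intro n τ
    show pmap τ ⁻¹' ((badIter L j n ∪ _) ∪ _) = _
    rw [Set.preimage_union, Set.preimage_union, ih n τ,
      pmap_preimage_symSet τ _]
    congr 1
    cases n with
    | zero => simp
    | succ m => exact pmap_preimage_symSet τ _

lemma symSet_null
    (hexch : ∀ σ : Equiv.Perm ℕ, {k | σ k ≠ k}.Finite → L.map (permNat σ) = L)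
    {n : ℕ} {S : Set (Fin n → 𝕏)} (hS : MeasurableSet S) (h0 : Lm L n S = 0) :
    Lm L n (symSet S) = 0 := by
  refine measure_iUnion_null (fun τ => ?_)
  calc Lm L n (pmap τ ⁻¹' S) = ((Lm L n).map (pmap τ)) S :=
        (Measure.map_apply measurable_pmap hS).symm
    _ = Lm L n S := by rw [invLm L hexch n τ]
    _ = 0 := h0

lemma badIter_null
    (hexch : ∀ σ : Equiv.Perm ℕ, {k | σ k ≠ k}.Finite → L.map (permNat σ) = L) :
    ∀ j n, Lm L n (badIter L j n) = 0 := by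
  haveI : ∀ k, IsMarkovKernel (Pg L k) := fun k => inferInstance
  intro j
  induction j with
  | zero =>
    intro n
    exact symSet_null L hexch (measurableSet_mismatch L n) (null_mismatch L hexch n)
  | succ j ih =>
    intro n
    refine measure_union_null (measure_union_null (ih n) ?_) ?_
    · refine symSet_null L hexch
        ((measurable_leakFn L (badIter_meas L j (n+1))) (measurableSet_singleton 0).compl) ?_
      have h1 : (Lm L n ⊗ₘ Pg L n) (snocm ⁻¹' badIter L j (n+1)) = 0 := by
        rw [← Measure.map_apply measurable_snocm (badIter_meas L j (n+1)),
          ← factorI L (masterPg L hexch) n]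
        exact ih (n+1)
      rw [Measure.compProd_apply (measurable_snocm (badIter_meas L j (n+1)))] at h1
      have h2 := (lintegral_eq_zero_iff
        (Kernel.measurable_kernel_prodMk_left
          (measurable_snocm (badIter_meas L j (n+1))))).1 h1
      exact ae_iff.1 h2
    · cases n with
      | zero => exact measure_empty
      | succ m =>
        refine symSet_null L hexch (measurable_initFn (badIter_meas L j m)) ?_
        have hN := badIter_meas L j m
        have hkey : Lm L (m+1)
            ((fun z : Fin (m+1) → 𝕏 => Fin.init z) ⁻¹' badIter L j m) = 0 := by
          rw [factorI L (masterPg L hexch) m,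
            Measure.map_apply measurable_snocm (measurable_initFn hN)]
          have hpre : snocm ⁻¹' ((fun z : Fin (m+1) → 𝕏 => Fin.init z) ⁻¹' badIter L j m)
              = (badIter L j m) ×ˢ (univ : Set 𝕏) := by
            ext p
            cases p with
            | mk x y =>
              simp only [mem_preimage, snocm_apply, Fin.init_snoc, Set.mem_prod, mem_univ,
                and_true]
          rw [hpre, Measure.compProd_apply_prod hN MeasurableSet.univ]
          calc ∫⁻ x in badIter L j m, Pg L m x univ ∂(Lm L m)
              = ∫⁻ x in badIter L j m, 1 ∂(Lm L m) :=
                lintegral_congr (fun x => measure_univ)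
            _ = Lm L m (badIter L j m) := by rw [setLIntegral_one]
            _ = 0 := ih m
        exact hkey

noncomputable def Bad (n : ℕ) : Set (Fin n → 𝕏) := ⋃ j, badIter L j n

lemma measurableSet_Bad (n : ℕ) : MeasurableSet (Bad L n) :=
  MeasurableSet.iUnion (fun j => badIter_meas L j n)

lemma null_Bad
    (hexch : ∀ σ : Equiv.Perm ℕ, {k | σ k ≠ k}.Finite → L.map (permNat σ) = L)
    (n : ℕ) : Lm L n (Bad L n) = 0 :=
  measure_iUnion_null (fun j => badIter_null L hexch j n)

lemma Bad_sym {n : ℕ} (τ : Equiv.Perm (Fin n)) : pmap τ ⁻¹' Bad L n = Bad L n := by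
  rw [Bad, Set.preimage_iUnion]
  exact Set.iUnion_congr (fun j => badIter_sym L j n τ)

lemma Bad_hered {n : ℕ} {x : Fin n → 𝕏} (hx : x ∈ Bad L n) (y : 𝕏) :
    snocm (x, y) ∈ Bad L (n+1) := by
  obtain ⟨j, hj⟩ := Set.mem_iUnion.1 hx
  refine Set.mem_iUnion.2 ⟨j+1, ?_⟩
  show snocm (x, y) ∈ (_ ∪ _) ∪ symSet {z : Fin (n+1) → 𝕏 | Fin.init z ∈ badIter L j n}
  refine Or.inr (subset_symSet ?_)
  show Fin.init (snocm (x, y)) ∈ badIter L j n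
  rw [snocm_apply, Fin.init_snoc]
  exact hj

lemma Bad_noleak {n : ℕ} {x : Fin n → 𝕏} (hx : x ∉ Bad L n) :
    Pg L n x {y | Fin.snoc x y ∈ Bad L (n+1)} = 0 := by
  have hset : {y | Fin.snoc x y ∈ Bad L (n+1)} = ⋃ j, {y | Fin.snoc x y ∈ badIter L j (n+1)} := by
    ext y
    simp [Bad, Set.mem_iUnion]
  rw [hset]
  refine measure_iUnion_null (fun j => ?_)
  have hx' : x ∉ badIter L (j+1) n := fun h => hx (Set.mem_iUnion.2 ⟨j+1, h⟩)
  have : x ∉ symSet {x | Pg L n x {y | Fin.snoc x y ∈ badIter L j (n+1)} ≠ 0} := by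
    intro h
    exact hx' (Or.inl (Or.inr h))
  have h2 : x ∉ {x | Pg L n x {y | Fin.snoc x y ∈ badIter L j (n+1)} ≠ 0} :=
    fun h => this (subset_symSet h)
  simpa using h2

lemma Bad_nomismatch {n : ℕ} {z : Fin (n+1) → 𝕏} (hz : z ∉ Bad L (n+1)) :
    Pg L (n+1) z = kc L n (dm n z) := by
  have h0 : z ∉ badIter L 0 (n+1) := fun h => hz (Set.mem_iUnion.2 ⟨0, h⟩)
  have h1 : z ∉ mismatch L (n+1) := fun h => h0 (subset_symSet h)
  by_contra hne
  exact h1 hne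

end FLRAux
end SecF4

section SecF5
open MeasureTheory ProbabilityTheory Set
open scoped ENNReal
namespace FLRAux

variable {𝕏 : Type*} [MeasurableSpace 𝕏] [StandardBorelSpace 𝕏] [Nonempty 𝕏]
variable (L : Measure (ℕ → 𝕏)) [IsProbabilityMeasure L]

noncomputable def mzero : Measure 𝕏 := L.map (fun f => f 0)

instance : IsProbabilityMeasure (mzero L) :=
  Measure.isProbabilityMeasure_map (measurable_pi_apply 0).aemeasurable

open Classical in
/-- The final predictive kernel. -/
noncomputable def Pfin (n : ℕ) : Kernel (Fin n → 𝕏) 𝕏 :=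
  Kernel.piecewise (measurableSet_Bad L n) (Kernel.const _ (mzero L)) (Pg L n)

instance {n : ℕ} : IsMarkovKernel (Pfin L n) := by
  rw [Pfin]; infer_instance

lemma Pfin_bad {n : ℕ} {x : Fin n → 𝕏} (hx : x ∈ Bad L n) : Pfin L n x = mzero L := by
  classical
  rw [Pfin, Kernel.piecewise_apply, if_pos hx, Kernel.const_apply]

lemma Pfin_good {n : ℕ} {x : Fin n → 𝕏} (hx : x ∉ Bad L n) : Pfin L n x = Pg L n x := by
  classical
  rw [Pfin, Kernel.piecewise_apply, if_neg hx]

lemma Pfin_sym (n : ℕ) (σ : Equiv.Perm (Fin n)) (x : Fin n → 𝕏) :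
    Pfin L n (pmap σ x) = Pfin L n x := by
  by_cases hx : x ∈ Bad L n
  · have hx2 : pmap σ x ∈ Bad L n := by
      rw [← Bad_sym L σ] at hx
      exact hx
    rw [Pfin_bad L hx2, Pfin_bad L hx]
  · have hx2 : pmap σ x ∉ Bad L n := by
      intro h
      refine hx ?_
      rw [← Bad_sym L σ]
      exact h
    rw [Pfin_good L hx2, Pfin_good L hx, Pg_pmap]

lemma Pfin_pred
    (hexch : ∀ σ : Equiv.Perm ℕ, {k | σ k ≠ k}.Finite → L.map (permNat σ) = L)
    (n : ℕ) {A : Set 𝕏} {B : Set (Fin n → 𝕏)} (hA : MeasurableSet A) (hB : MeasurableSet B) :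
    L.map (en n) (B ×ˢ A) = ∫⁻ x in B, Pfin L n x A ∂(Lm L n) := by
  rw [masterPg L hexch n, Measure.compProd_apply_prod hB hA]
  refine lintegral_congr_ae (ae_restrict_of_ae ?_)
  have hae : ∀ᵐ x ∂(Lm L n), x ∉ Bad L n := by
    rw [ae_iff]
    simpa using null_Bad L hexch n
  filter_upwards [hae] with x hx
  rw [Pfin_good L hx]

lemma Pfin_ii
    (hexch : ∀ σ : Equiv.Perm ℕ, {k | σ k ≠ k}.Finite → L.map (permNat σ) = L)
    (n : ℕ) (x : Fin n → 𝕏) {A B : Set 𝕏} (hA : MeasurableSet A) (hB : MeasurableSet B) :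
    ∫⁻ y in A, Pfin L (n+1) (Fin.snoc x y) B ∂(Pfin L n x)
      = ∫⁻ y in B, Pfin L (n+1) (Fin.snoc x y) A ∂(Pfin L n x) := by
  by_cases hx : x ∈ Bad L n
  · rw [Pfin_bad L hx]
    have hb : ∀ (y : 𝕏), Pfin L (n+1) (Fin.snoc x y) = mzero L := by
      intro y
      exact Pfin_bad L (Bad_hered L hx y)
    calc ∫⁻ y in A, Pfin L (n+1) (Fin.snoc x y) B ∂(mzero L)
        = ∫⁻ y in A, mzero L B ∂(mzero L) :=
          lintegral_congr (fun y => by rw [hb y])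
      _ = mzero L B * mzero L A := setLIntegral_const _ _
      _ = mzero L A * mzero L B := mul_comm _ _
      _ = ∫⁻ y in B, mzero L A ∂(mzero L) := (setLIntegral_const _ _).symm
      _ = ∫⁻ y in B, Pfin L (n+1) (Fin.snoc x y) A ∂(mzero L) :=
          lintegral_congr (fun y => by rw [hb y])
  · rw [Pfin_good L hx]
    have hae : ∀ᵐ y ∂(Pg L n x), Pfin L (n+1) (Fin.snoc x y) = kc L n (x, y) := by
      rw [ae_iff]
      refine measure_mono_null ?_ (Bad_noleak L hx)
      intro y hy
      simp only [mem_setOf_eq] at hy ⊢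
      by_contra hgood
      refine hy ?_
      have h1 : Pfin L (n+1) (Fin.snoc x y) = Pg L (n+1) (Fin.snoc x y) :=
        Pfin_good L hgood
      have h2 : Pg L (n+1) (Fin.snoc x y) = kc L n (dm n (Fin.snoc x y)) :=
        Bad_nomismatch L hgood
      rw [h1, h2, show dm n (Fin.snoc x y) = (x, y) from dm_snocm (x, y)]
    have key : ∀ {C D : Set 𝕏}, MeasurableSet C → MeasurableSet D →
        ∫⁻ y in C, Pfin L (n+1) (Fin.snoc x y) D ∂(Pg L n x) = nuhat L n x (C ×ˢ D) := by
      intro C D hC hD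
      have h1 : ∫⁻ y in C, Pfin L (n+1) (Fin.snoc x y) D ∂(Pg L n x)
          = ∫⁻ y in C, kc L n (x, y) D ∂(Pg L n x) := by
        refine lintegral_congr_ae (ae_restrict_of_ae ?_)
        filter_upwards [hae] with y hy
        rw [hy]
      rw [h1, PW L n x hC hD]
    rw [key hA hB, key hB hA]
    conv_lhs => rw [← nuhat_swap L x]
    rw [Measure.map_apply measurable_swap (hA.prod hB)]
    congr 1
    ext p
    simp [Set.mem_prod, and_comm]

end FLRAux
end SecF5


/-- **Predictive characterization of exchangeability** (Fortini, Ladelli, Regazzini).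
A sequence `(X_n)` is exchangeable if and only if it admits a predictive rule `(P_n)` such that
(i) each `P_n(A | x_{1:n})` is a symmetric function of `(x_1,…,x_n)`, and
(ii) the set function `(A,B) ↦ ∫_A P_{n+1}(B | x_{1:n}, x_{n+1}) dP_n(x_{n+1} | x_{1:n})`
is symmetric in `A` and `B`. -/
theorem statement1
    {Ω 𝕏 : Type*} [MeasurableSpace Ω] [MeasurableSpace 𝕏] [TopologicalSpace 𝕏]
    [PolishSpace 𝕏] [BorelSpace 𝕏]
    (μ : Measure Ω) [IsProbabilityMeasure μ]
    (X : ℕ → Ω → 𝕏) (hX : ∀ n, Measurable (X n)) :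
    Exchangeable μ X ↔
      ∃ P : (n : ℕ) → Kernel (Fin n → 𝕏) 𝕏,
        (∀ n, IsMarkovKernel (P n)) ∧ IsPredictiveRule μ X P ∧
        -- (i) symmetry of the predictive distributions in the past observations
        (∀ (n : ℕ) (σ : Equiv.Perm (Fin n)) (x : Fin n → 𝕏) (A : Set 𝕏), MeasurableSet A →
          P n (fun i => x (σ i)) A = P n x A) ∧
        -- (ii) symmetry in the next two observations
        (∀ (n : ℕ) (x : Fin n → 𝕏) (A B : Set 𝕏), MeasurableSet A → MeasurableSet B →
          ∫⁻ y in A, P (n + 1) (Fin.snoc x y) B ∂(P n x)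
            = ∫⁻ y in B, P (n + 1) (Fin.snoc x y) A ∂(P n x)) := by
    classical
  have hXm : Measurable (fun ω (n : ℕ) => X n ω) := measurable_pi_lambda _ hX
  set L : Measure (ℕ → 𝕏) := μ.map (fun ω (n : ℕ) => X n ω) with hLdef
  haveI : IsProbabilityMeasure L := Measure.isProbabilityMeasure_map hXm.aemeasurable
  haveI hne : Nonempty 𝕏 := by
    by_contra h
    rw [not_nonempty_iff] at h
    haveI hΩ : IsEmpty Ω := ⟨fun ω => h.false (X 0 ω)⟩
    have h1 : μ Set.univ = 1 := measure_univ
    rw [Set.univ_eq_empty_iff.2 hΩ] at h1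
    simp at h1
  have hres : ∀ n, Measure.map (fun ω (i : Fin n) => X i ω) μ = FLRAux.Lm L n := by
    intro n
    rw [FLRAux.Lm, hLdef, Measure.map_map FLRAux.measurable_res hXm]
    rfl
  have hset : ∀ (n : ℕ) (A : Set 𝕏) (B : Set (Fin n → 𝕏)), MeasurableSet A → MeasurableSet B →
      μ {ω | (fun i : Fin n => X i ω) ∈ B ∧ X n ω ∈ A}
        = (L.map (FLRAux.en n)) (B ×ˢ A) := by
    intro n A B hA hB
    rw [Measure.map_apply FLRAux.measurable_en (hB.prod hA), hLdef,
      Measure.map_apply hXm (FLRAux.measurable_en (hB.prod hA))]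
    rfl
  have hExchIff : Exchangeable μ X ↔
      (∀ σ : Equiv.Perm ℕ, {k | σ k ≠ k}.Finite → L.map (FLRAux.permNat σ) = L) := by
    unfold Exchangeable
    refine forall_congr' (fun σ => imp_congr_right (fun hσ => ?_))
    have h1 : L.map (FLRAux.permNat σ) = Measure.map (fun ω (n : ℕ) => X (σ n) ω) μ := by
      rw [hLdef, Measure.map_map FLRAux.measurable_permNat hXm]
      rfl
    rw [h1]
  constructor
  · intro hex
    have hexch := hExchIff.1 hex
    refine ⟨fun n => FLRAux.Pfin L n, fun n => inferInstance, ?_, ?_, ?_⟩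
    · intro n A B hA hB
      rw [hset n A B hA hB, hres n, FLRAux.Pfin_pred L hexch n hA hB]
    · intro n σ x A hA
      rw [show (fun i => x (σ i)) = FLRAux.pmap σ x from rfl, FLRAux.Pfin_sym L n σ x]
    · intro n x A B hA hB
      exact FLRAux.Pfin_ii L hexch n x hA hB
  · rintro ⟨P, hPm, hPred, hsym, hii⟩
    haveI : ∀ n, IsMarkovKernel (P n) := hPm
    rw [hExchIff]
    have hM : ∀ n, L.map (FLRAux.en n) = FLRAux.Lm L n ⊗ₘ P n := by
      intro n
      haveI : IsProbabilityMeasure (L.map (FLRAux.en (𝕏 := 𝕏) n)) :=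
        Measure.isProbabilityMeasure_map FLRAux.measurable_en.aemeasurable
      refine FLRAux.prod_ext (fun B A hB hA => ?_)
      rw [Measure.compProd_apply_prod hB hA, ← hset n A B hA hB]
      have h1 := hPred n A B hA hB
      rw [hres n] at h1
      exact h1
    have hsym' : ∀ (n : ℕ) (σ : Equiv.Perm (Fin n)) (x : Fin n → 𝕏) (A : Set 𝕏),
        MeasurableSet A → P n (FLRAux.pmap σ x) A = P n x A :=
      fun n σ x A hA => hsym n σ x A hA
    exact fun σ hσ =>
      FLRAux.exchangeable_of_invAll L (FLRAux.invAll L hM hsym' hii) σ hσ
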